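/- arXiv:2106.15207 — 2 statements merged into one kernel-verified Lean document; each statement's English description precedes it below -/
import Mathlib

section
/- Let Z be a set of T distinct datapoints, W ⊆ ℝ^d closed convex, f: W × Z → ℝ with each f(·;z) G-Lipschitz and β-smooth, and F(w) := (1/T)∑_{z∈Z} f(w;z) λ-strongly convex; set κ := β/λ. Consider SGD on a random order sequence z_1,…,z_T ∼ 𝒵(T): w_{t+1} = Π_W(w_t − η_t ∇f(w_t; z_t)) with step sizes η_t = min{ λ/(2β²), 4/(λt) } and any w_1 ∈ W. Then for all m ≤ T/(2κ), SGD is on-average-oos stable with rate ε_stab(m) ≤ 8G/(λm); i.e., for every i ≤ m, E ‖w_{m+1} − w^{(i)}_{m+1}‖ ≤ 8G/(λm), where w^{(i)}_{m+1} is the iterate produced by running the same SGD on the sequence with z_i replaced by z_{m+1}. -/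
/-- `F` is `μ`-strongly convex on `W` (via its gradient). -/
def StrongConvexOnSet {d : ℕ} (W : Set (EuclideanSpace ℝ (Fin d))) (μ : ℝ)
    (F : EuclideanSpace ℝ (Fin d) → ℝ) : Prop :=
  ∀ x ∈ W, ∀ y ∈ W,
    F x + (inner ℝ (gradient F x) (y - x) : ℝ) + μ / 2 * ‖y - x‖ ^ 2 ≤ F y

/-- `gdIter proj f η zs w1 m` is the iterate `w_{m+1}` obtained by `m` projected gradient
steps `w_{t+1} = Π(w_t - η_t ∇f(w_t; z_t))` on the datapoint sequence `zs`, from `w1`. -/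
noncomputable def gdIter {d : ℕ} {Z : Type*}
    (proj : EuclideanSpace ℝ (Fin d) → EuclideanSpace ℝ (Fin d))
    (f : EuclideanSpace ℝ (Fin d) → Z → ℝ) (η : ℕ → ℝ) (zs : ℕ → Z)
    (w1 : EuclideanSpace ℝ (Fin d)) : ℕ → EuclideanSpace ℝ (Fin d)
  | 0 => w1
  | t + 1 => proj (gdIter proj f η zs w1 t
      - η (t + 1) • gradient (fun u => f u (zs (t + 1))) (gdIter proj f η zs w1 t))

/-- `ordSeq hT σ t` is the `t`-th datapoint `z_t = σ(t)` of the random-order sequence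
induced by the permutation `σ` (rounds are 1-indexed). -/
def ordSeq {T : ℕ} (hT : 0 < T) (σ : Equiv.Perm (Fin T)) : ℕ → Fin T :=
  fun t => σ ⟨(t - 1) % T, Nat.mod_lt _ hT⟩

variable {d : ℕ}
local notation "E" => EuclideanSpace ℝ (Fin d)

lemma proj_vi {W : Set (EuclideanSpace ℝ (Fin d))} (hWconv : Convex ℝ W)
    (proj : E → E) (hproj : ∀ x, proj x ∈ W ∧ ∀ w ∈ W, ‖x - proj x‖ ≤ ‖x - w‖)
    (x : E) {w : E} (hw : w ∈ W) : (inner ℝ (x - proj x) (w - proj x) : ℝ) ≤ 0 := by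
  set p := proj x with hp
  have hpW : p ∈ W := (hproj x).1
  have key : ∀ s : ℝ, 0 < s → s ≤ 1 → 2 * (inner ℝ (x - p) (w - p) : ℝ) ≤ s * ‖w - p‖ ^ 2 := by
    intro s hs hs1
    have hqW : p + s • (w - p) ∈ W := by
      have := hWconv hpW hw (a := 1 - s) (b := s) (by linarith) (le_of_lt hs) (by ring)
      convert this using 1
      module
    have h1 : ‖x - p‖ ≤ ‖x - (p + s • (w - p))‖ := (hproj x).2 _ hqW
    have h2 : ‖x - p‖ ^ 2 ≤ ‖x - (p + s • (w - p))‖ ^ 2 := by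
      have := mul_self_le_mul_self (norm_nonneg _) h1
      simpa [pow_two] using this
    have h3 : x - (p + s • (w - p)) = (x - p) - s • (w - p) := by abel
    rw [h3] at h2
    have h4 : (‖s • (w-p)‖)^2 = s^2 * ‖w - p‖^2 := by
      rw [norm_smul]; simp [mul_pow, abs_of_pos hs]
    have expand : ‖(x - p) - s • (w - p)‖^2
        = ‖x - p‖^2 - 2 * (s * (inner ℝ (x - p) (w - p) : ℝ)) + s^2 * ‖w - p‖^2 := by
      rw [norm_sub_sq_real, real_inner_smul_right, h4]
    rw [expand] at h2
    have h5 : 2 * (s * (inner ℝ (x - p) (w - p) : ℝ)) ≤ s^2 * ‖w-p‖^2 := by linarith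
    nlinarith [h5, hs, sq_nonneg s]
  have : 2 * (inner ℝ (x - p) (w - p) : ℝ) ≤ 0 := by
    refine le_of_forall_pos_le_add ?_
    intro ε hε
    rcases le_or_gt (‖w - p‖ ^ 2) 0 with hC | hC
    · have := key 1 one_pos le_rfl
      nlinarith
    · set s := min 1 (ε / ‖w - p‖ ^ 2) with hsdef
      have hs : 0 < s := lt_min one_pos (div_pos hε hC)
      have := key s hs (min_le_left _ _)
      have h6 : s * ‖w - p‖ ^ 2 ≤ ε := by
        calc s * ‖w - p‖ ^ 2 ≤ (ε / ‖w - p‖ ^ 2) * ‖w - p‖ ^ 2 :=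
              mul_le_mul_of_nonneg_right (min_le_right _ _) (le_of_lt hC)
          _ = ε := div_mul_cancel₀ ε (ne_of_gt hC)
      linarith
  linarith

lemma proj_nonexp {W : Set (EuclideanSpace ℝ (Fin d))} (hWconv : Convex ℝ W)
    (proj : E → E) (hproj : ∀ x, proj x ∈ W ∧ ∀ w ∈ W, ‖x - proj x‖ ≤ ‖x - w‖)
    (a b : E) : ‖proj a - proj b‖ ≤ ‖a - b‖ := by
  have h1 := proj_vi hWconv proj hproj a (hproj b).1
  have h2 := proj_vi hWconv proj hproj b (hproj a).1
  set pa := proj a; set pb := proj b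
  have key : ‖pa - pb‖ ^ 2 ≤ (inner ℝ (a - b) (pa - pb) : ℝ) := by
    have e1 : (inner ℝ (a - pa) (pb - pa) : ℝ) ≤ 0 := h1
    have e2 : (inner ℝ (b - pb) (pa - pb) : ℝ) ≤ 0 := h2
    have e3 : (inner ℝ (a - b) (pa - pb) : ℝ)
        = (inner ℝ (a - pa) (pa - pb) : ℝ) + (inner ℝ (pa - pb) (pa - pb) : ℝ)
          + (inner ℝ (pb - b) (pa - pb) : ℝ) := by
      rw [← inner_add_left, ← inner_add_left]
      congr 1
      abel
    have e4 : (inner ℝ (a - pa) (pa - pb) : ℝ) = -(inner ℝ (a - pa) (pb - pa) : ℝ) := by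
      rw [← inner_neg_right]; congr 1; abel
    have e5 : (inner ℝ (pb - b) (pa - pb) : ℝ) = -(inner ℝ (b - pb) (pa - pb) : ℝ) := by
      rw [← inner_neg_left]; congr 1; abel
    rw [real_inner_self_eq_norm_sq] at e3
    nlinarith [e3, e4, e5]
  have hcs : (inner ℝ (a - b) (pa - pb) : ℝ) ≤ ‖a - b‖ * ‖pa - pb‖ := real_inner_le_norm _ _
  rcases eq_or_lt_of_le (norm_nonneg (pa - pb)) with h0 | h0
  · rw [← h0]; exact norm_nonneg _
  · nlinarith [key, hcs]

open Finset

lemma exchange_lemma {T : ℕ} (A : Finset (Fin T)) (p : Fin T) (hp : p ∉ A)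
    (F : Equiv.Perm (Fin T) → Fin T → ℝ)
    (hF : ∀ σ τ : Equiv.Perm (Fin T), (∀ a ∈ A, σ a = τ a) → ∀ j, F σ j = F τ j) :
    ∑ σ : Equiv.Perm (Fin T), ∑ j ∈ (Finset.univ \ A.image σ), F σ j
      = ((T - A.card : ℕ) : ℝ) * ∑ σ : Equiv.Perm (Fin T), F σ (σ p) := by
  have key : ∀ σ : Equiv.Perm (Fin T), ∀ j ∈ Finset.univ \ A.image σ,
      (σ * Equiv.swap p (σ⁻¹ j)) p = j ∧ (∀ a ∈ A, (σ * Equiv.swap p (σ⁻¹ j)) a = σ a) := by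
    intro σ j hj
    rw [Finset.mem_sdiff] at hj
    constructor
    · simp [Equiv.Perm.mul_apply, Equiv.swap_apply_left]
    · intro a ha
      have h1 : a ≠ p := fun h => hp (h ▸ ha)
      have h2 : a ≠ σ⁻¹ j := by
        intro h
        exact hj.2 (Finset.mem_image.mpr ⟨a, ha, by rw [h]; simp⟩)
      rw [Equiv.Perm.mul_apply, Equiv.swap_apply_of_ne_of_ne h1 h2]
  have mem_target : ∀ σ : Equiv.Perm (Fin T), ∀ j ∈ Finset.univ \ A.image σ,
      σ p ∈ Finset.univ \ A.image (σ * Equiv.swap p (σ⁻¹ j)) := by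
    intro σ j hj
    rw [Finset.mem_sdiff]
    refine ⟨Finset.mem_univ _, ?_⟩
    intro hmem
    obtain ⟨a, ha, hae⟩ := Finset.mem_image.mp hmem
    rw [(key σ j hj).2 a ha] at hae
    exact hp ((σ.injective hae) ▸ ha)
  rw [Finset.sum_sigma' (Finset.univ : Finset (Equiv.Perm (Fin T)))
    (fun (σ : Equiv.Perm (Fin T)) => Finset.univ \ A.image ⇑σ)
    (fun (σ : Equiv.Perm (Fin T)) (j : Fin T) => F σ j)]
  · have card_eq : ∀ σ : Equiv.Perm (Fin T),
        (Finset.univ \ A.image σ).card = T - A.card := by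
      intro σ
      rw [Finset.card_sdiff_of_subset (Finset.subset_univ _), Finset.card_image_of_injective _ σ.injective]
      simp
    calc ∑ x ∈ ((Finset.univ : Finset (Equiv.Perm (Fin T))).sigma
            fun (σ : Equiv.Perm (Fin T)) => Finset.univ \ A.image ⇑σ), F x.1 x.2
        = ∑ x ∈ ((Finset.univ : Finset (Equiv.Perm (Fin T))).sigma
            fun (σ : Equiv.Perm (Fin T)) => Finset.univ \ A.image ⇑σ), F x.1 (x.1 p) := by
          refine Finset.sum_nbij' (i := fun x => ⟨x.1 * Equiv.swap p (x.1⁻¹ x.2), x.1 p⟩)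
            (j := fun x => ⟨x.1 * Equiv.swap p (x.1⁻¹ x.2), x.1 p⟩) ?_ ?_ ?_ ?_ ?_
          · intro x hx
            rw [Finset.mem_sigma] at hx ⊢
            exact ⟨Finset.mem_univ _, mem_target x.1 x.2 hx.2⟩
          · intro x hx
            rw [Finset.mem_sigma] at hx ⊢
            exact ⟨Finset.mem_univ _, mem_target x.1 x.2 hx.2⟩
          · intro x hx
            rw [Finset.mem_sigma] at hx
            obtain ⟨h1, h2⟩ := (key x.1 x.2 hx.2)
            have hinv : (x.1 * Equiv.swap p (x.1⁻¹ x.2))⁻¹ (x.1 p) = x.1⁻¹ x.2 := by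
              rw [Equiv.Perm.eq_inv_iff_eq]
              simp [Equiv.Perm.mul_apply]
            ext1
            · simp only [hinv]
              rw [mul_assoc, Equiv.swap_mul_self, mul_one]
            · exact heq_of_eq h1
          · intro x hx
            rw [Finset.mem_sigma] at hx
            obtain ⟨h1, h2⟩ := (key x.1 x.2 hx.2)
            have hinv : (x.1 * Equiv.swap p (x.1⁻¹ x.2))⁻¹ (x.1 p) = x.1⁻¹ x.2 := by
              rw [Equiv.Perm.eq_inv_iff_eq]
              simp [Equiv.Perm.mul_apply]
            ext1
            · simp only [hinv]
              rw [mul_assoc, Equiv.swap_mul_self, mul_one]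
            · exact heq_of_eq h1
          · intro x hx
            rw [Finset.mem_sigma] at hx
            obtain ⟨h1, h2⟩ := (key x.1 x.2 hx.2)
            exact (hF _ _ (fun a ha => (h2 a ha).symm) x.2).trans (by rw [h1])
      _ = ∑ σ : Equiv.Perm (Fin T), ∑ j ∈ (Finset.univ \ A.image σ), F σ (σ p) := by
          rw [Finset.sum_sigma]
      _ = ((T - A.card : ℕ) : ℝ) * ∑ σ : Equiv.Perm (Fin T), F σ (σ p) := by
          rw [Finset.mul_sum]
          congr 1
          ext σ
          rw [Finset.sum_const, card_eq σ, nsmul_eq_mul]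


lemma gradient_avg {d T : ℕ} (f : EuclideanSpace ℝ (Fin d) → Fin T → ℝ)
    (hdiff : ∀ z, Differentiable ℝ (fun w => f w z)) (x : EuclideanSpace ℝ (Fin d)) :
    gradient (fun w => (1 / T : ℝ) * ∑ z : Fin T, f w z) x
      = (1 / T : ℝ) • ∑ z : Fin T, gradient (fun u => f u z) x := by
  have h1 : HasFDerivAt (fun w => (1 / T : ℝ) * ∑ z : Fin T, f w z)
      ((1 / T : ℝ) • ∑ z : Fin T, fderiv ℝ (fun u => f u z) x) x := by
    exact (HasFDerivAt.fun_sum (fun z _ => ((hdiff z) x).hasFDerivAt)).const_mul _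
  rw [gradient, h1.fderiv, map_smul, map_sum]
  rfl

set_option maxHeartbeats 1000000 in
lemma step_bound {d T : ℕ} (hT : 0 < T)
    {W : Set (EuclideanSpace ℝ (Fin d))}
    (f : EuclideanSpace ℝ (Fin d) → Fin T → ℝ)
    (β lam : ℝ) (hβ : 0 < β) (hlam : 0 < lam)
    (hdiff : ∀ z, Differentiable ℝ (fun w => f w z))
    (hsmooth : ∀ z, ∀ x ∈ W, ∀ y ∈ W,
      ‖gradient (fun u => f u z) x - gradient (fun u => f u z) y‖ ≤ β * ‖x - y‖)
    (hstrong : StrongConvexOnSet W lam (fun w => (1 / T : ℝ) * ∑ z : Fin T, f w z))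
    (x y : EuclideanSpace ℝ (Fin d)) (hx : x ∈ W) (hy : y ∈ W)
    (η : ℝ) (hη0 : 0 ≤ η) (hη1 : η ≤ lam / (2 * β ^ 2)) (hη2 : η * lam ≤ 2)
    (U : Finset (Fin T)) (hU : (U.card : ℝ) * β ≤ (T : ℝ) * lam / 2) :
    ∑ j ∈ Finset.univ \ U,
        ‖(x - y) - η • (gradient (fun u => f u j) x - gradient (fun u => f u j) y)‖
      ≤ ((Finset.univ \ U).card : ℝ) * (1 - η * lam / 4) * ‖x - y‖ := by
  classical
  set u := x - y with hu
  set g : Fin T → EuclideanSpace ℝ (Fin d) :=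
    fun j => gradient (fun v => f v j) x - gradient (fun v => f v j) y with hg
  set K := Finset.univ \ U with hK
  have hgβ : ∀ j, ‖g j‖ ≤ β * ‖u‖ := fun j => hsmooth j x hx y hy
  set F : EuclideanSpace ℝ (Fin d) → ℝ := fun w => (1 / T : ℝ) * ∑ z : Fin T, f w z with hF
  have hcoer : lam * ‖u‖ ^ 2 ≤ (inner ℝ u (gradient F x - gradient F y) : ℝ) := by
    have s1 := hstrong x hx y hy
    have s2 := hstrong y hy x hx
    have hyx : y - x = -u := by rw [hu]; abel
    have hxyu : x - y = u := hu.symm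
    rw [hyx, inner_neg_right, norm_neg] at s1
    rw [hxyu] at s2
    have e2 : (inner ℝ u (gradient F x - gradient F y) : ℝ)
        = (inner ℝ (gradient F x) u : ℝ) - (inner ℝ (gradient F y) u : ℝ) := by
      rw [inner_sub_right, real_inner_comm u (gradient F x), real_inner_comm u (gradient F y)]
    have e3 : (inner ℝ (gradient F y) u : ℝ) = (inner ℝ (gradient F y) (x - y) : ℝ) := by rw [hxyu]
    linarith [s1, s2, e2, e3]
  have hsum_univ : (T : ℝ) * lam * ‖u‖ ^ 2 ≤ ∑ j : Fin T, (inner ℝ u (g j) : ℝ) := by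
    have e3 : ∑ j : Fin T, (inner ℝ u (g j) : ℝ) = (inner ℝ u (∑ j : Fin T, g j) : ℝ) := by
      rw [inner_sum]
    have hT' : (T : ℝ) ≠ 0 := Nat.cast_ne_zero.mpr hT.ne'
    have gx : gradient F x = (1 / T : ℝ) • ∑ z : Fin T, gradient (fun v => f v z) x :=
      gradient_avg f hdiff x
    have gy : gradient F y = (1 / T : ℝ) • ∑ z : Fin T, gradient (fun v => f v z) y :=
      gradient_avg f hdiff y
    have e4 : ∑ j : Fin T, g j = (T : ℝ) • (gradient F x - gradient F y) := by
      rw [hg, Finset.sum_sub_distrib, smul_sub, gx, gy, smul_smul, smul_smul]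
      have : (T : ℝ) * (1 / T) = 1 := by field_simp
      rw [this, one_smul, one_smul]
    rw [e3, e4, real_inner_smul_right]
    nlinarith [hcoer]
  have hsum_U : ∑ j ∈ U, (inner ℝ u (g j) : ℝ) ≤ (U.card : ℝ) * (β * ‖u‖ ^ 2) := by
    calc ∑ j ∈ U, (inner ℝ u (g j) : ℝ) ≤ ∑ j ∈ U, β * ‖u‖ ^ 2 := by
          refine Finset.sum_le_sum (fun j _ => ?_)
          calc (inner ℝ u (g j) : ℝ) ≤ ‖u‖ * ‖g j‖ := real_inner_le_norm _ _
            _ ≤ ‖u‖ * (β * ‖u‖) := mul_le_mul_of_nonneg_left (hgβ j) (norm_nonneg _)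
            _ = β * ‖u‖ ^ 2 := by ring
      _ = (U.card : ℝ) * (β * ‖u‖ ^ 2) := by rw [Finset.sum_const, nsmul_eq_mul]
  have hKcard : (K.card : ℝ) ≤ (T : ℝ) := by
    have := Finset.card_le_card (Finset.subset_univ K)
    simpa using this
  have hsum_K : (K.card : ℝ) * (lam / 2) * ‖u‖ ^ 2 ≤ ∑ j ∈ K, (inner ℝ u (g j) : ℝ) := by
    have hsplit : ∑ j ∈ K, (inner ℝ u (g j) : ℝ) + ∑ j ∈ U, (inner ℝ u (g j) : ℝ)
        = ∑ j : Fin T, (inner ℝ u (g j) : ℝ) := by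
      rw [hK]; exact Finset.sum_sdiff (Finset.subset_univ U)
    have h1 : (U.card : ℝ) * β * ‖u‖ ^ 2 ≤ ((T : ℝ) * lam / 2) * ‖u‖ ^ 2 :=
      mul_le_mul_of_nonneg_right hU (sq_nonneg _)
    have h2 : (K.card : ℝ) * (lam / 2) * ‖u‖ ^ 2 ≤ (T : ℝ) * (lam / 2) * ‖u‖ ^ 2 := by
      have : (0:ℝ) ≤ (lam / 2) * ‖u‖ ^ 2 := by positivity
      nlinarith [hKcard]
    nlinarith [hsum_univ, hsum_U, hsplit]
  have hsq : ∀ j, ‖u - η • g j‖ ^ 2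
      = ‖u‖ ^ 2 - 2 * η * (inner ℝ u (g j) : ℝ) + η ^ 2 * ‖g j‖ ^ 2 := by
    intro j
    rw [norm_sub_sq_real, real_inner_smul_right, norm_smul, Real.norm_eq_abs,
      abs_of_nonneg hη0]
    ring
  have e6 : ∑ j ∈ K, ‖g j‖ ^ 2 ≤ (K.card : ℝ) * (β ^ 2 * ‖u‖ ^ 2) := by
    calc ∑ j ∈ K, ‖g j‖ ^ 2 ≤ ∑ j ∈ K, β ^ 2 * ‖u‖ ^ 2 := by
          refine Finset.sum_le_sum (fun j _ => ?_)
          have := hgβ j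
          nlinarith [norm_nonneg (g j), norm_nonneg u]
      _ = (K.card : ℝ) * (β ^ 2 * ‖u‖ ^ 2) := by rw [Finset.sum_const, nsmul_eq_mul]
  have e7 : η ^ 2 * β ^ 2 ≤ η * lam / 2 := by
    have h2b : (0:ℝ) < 2 * β ^ 2 := by positivity
    have : η * (2 * β ^ 2) ≤ lam := (le_div_iff₀ h2b).mp hη1
    nlinarith
  have hsum_sq : ∑ j ∈ K, ‖u - η • g j‖ ^ 2
      ≤ (K.card : ℝ) * ((1 - η * lam / 2) * ‖u‖ ^ 2) := by
    have e5 : ∑ j ∈ K, ‖u - η • g j‖ ^ 2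
        = (K.card : ℝ) * ‖u‖ ^ 2 - 2 * η * ∑ j ∈ K, (inner ℝ u (g j) : ℝ)
          + η ^ 2 * ∑ j ∈ K, ‖g j‖ ^ 2 := by
      simp_rw [hsq]
      rw [Finset.sum_add_distrib, Finset.sum_sub_distrib, Finset.sum_const, nsmul_eq_mul,
        ← Finset.mul_sum, ← Finset.mul_sum]
    have h_a := mul_le_mul_of_nonneg_left hsum_K (by positivity : (0:ℝ) ≤ 2 * η)
    have h_b := mul_le_mul_of_nonneg_left e6 (sq_nonneg η)
    have h_c := mul_le_mul_of_nonneg_right e7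
      (by positivity : (0:ℝ) ≤ (K.card : ℝ) * ‖u‖ ^ 2)
    linarith [e5, h_a, h_b, h_c]
  have hCS : (∑ j ∈ K, ‖u - η • g j‖) ^ 2
      ≤ (∑ j ∈ K, ‖u - η • g j‖ ^ 2) * (K.card : ℝ) := by
    have := Finset.sum_mul_sq_le_sq_mul_sq K (fun j => ‖u - η • g j‖) (fun _ => 1)
    simpa using this
  have h14 : (0:ℝ) ≤ 1 - η * lam / 4 := by linarith
  have hfinal_sq : (∑ j ∈ K, ‖u - η • g j‖) ^ 2
      ≤ ((K.card : ℝ) * (1 - η * lam / 4) * ‖u‖) ^ 2 := by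
    have key2 : (1 - η * lam / 2) ≤ (1 - η * lam / 4) ^ 2 := by nlinarith [sq_nonneg (η * lam)]
    have hcc : (0:ℝ) ≤ (K.card : ℝ) ^ 2 * ‖u‖ ^ 2 := by positivity
    have hmm := mul_le_mul_of_nonneg_left key2 hcc
    calc (∑ j ∈ K, ‖u - η • g j‖) ^ 2
        ≤ (∑ j ∈ K, ‖u - η • g j‖ ^ 2) * (K.card : ℝ) := hCS
      _ ≤ ((K.card : ℝ) * ((1 - η * lam / 2) * ‖u‖ ^ 2)) * (K.card : ℝ) :=
          mul_le_mul_of_nonneg_right hsum_sq (Nat.cast_nonneg _)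
      _ ≤ ((K.card : ℝ) * (1 - η * lam / 4) * ‖u‖) ^ 2 := by nlinarith [hmm]
  have hL : 0 ≤ ∑ j ∈ K, ‖u - η • g j‖ := Finset.sum_nonneg (fun j _ => norm_nonneg _)
  have hR : 0 ≤ (K.card : ℝ) * (1 - η * lam / 4) * ‖u‖ := by positivity
  calc ∑ j ∈ K, ‖u - η • g j‖ = Real.sqrt ((∑ j ∈ K, ‖u - η • g j‖) ^ 2) := by
        rw [Real.sqrt_sq hL]
    _ ≤ Real.sqrt (((K.card : ℝ) * (1 - η * lam / 4) * ‖u‖) ^ 2) := Real.sqrt_le_sqrt hfinal_sq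
    _ = (K.card : ℝ) * (1 - η * lam / 4) * ‖u‖ := Real.sqrt_sq hR



lemma gdIter_succ {d : ℕ} {Z : Type*} (proj : EuclideanSpace ℝ (Fin d) → EuclideanSpace ℝ (Fin d))
    (f : EuclideanSpace ℝ (Fin d) → Z → ℝ) (η : ℕ → ℝ) (zs : ℕ → Z)
    (w1 : EuclideanSpace ℝ (Fin d)) (t : ℕ) :
    gdIter proj f η zs w1 (t + 1) = proj (gdIter proj f η zs w1 t
      - η (t + 1) • gradient (fun u => f u (zs (t + 1))) (gdIter proj f η zs w1 t)) := rfl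

lemma gdIter_mem {d : ℕ} {Z : Type*} {W : Set (EuclideanSpace ℝ (Fin d))}
    (proj : EuclideanSpace ℝ (Fin d) → EuclideanSpace ℝ (Fin d))
    (hproj : ∀ x, proj x ∈ W ∧ ∀ w ∈ W, ‖x - proj x‖ ≤ ‖x - w‖)
    (f : EuclideanSpace ℝ (Fin d) → Z → ℝ) (η : ℕ → ℝ) (zs : ℕ → Z)
    (w1 : EuclideanSpace ℝ (Fin d)) (hw1 : w1 ∈ W) :
    ∀ k, gdIter proj f η zs w1 k ∈ W
  | 0 => hw1
  | k + 1 => (hproj _).1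

lemma gdIter_congr {d : ℕ} {Z : Type*}
    (proj : EuclideanSpace ℝ (Fin d) → EuclideanSpace ℝ (Fin d))
    (f : EuclideanSpace ℝ (Fin d) → Z → ℝ) (η : ℕ → ℝ) (zs zs' : ℕ → Z)
    (w1 : EuclideanSpace ℝ (Fin d)) (k : ℕ)
    (h : ∀ s, 1 ≤ s → s ≤ k → zs s = zs' s) :
    gdIter proj f η zs w1 k = gdIter proj f η zs' w1 k := by
  induction k with
  | zero => rfl
  | succ k ih =>
    have ih' := ih (fun s h1 h2 => h s h1 (by omega))
    rw [gdIter_succ, gdIter_succ, ih', h (k+1) (by omega) le_rfl]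

lemma min_prod_step (c : ℝ) (hc : 0 < c) (t : ℕ) (ht : 1 ≤ t) :
    min c (1/(t:ℝ)) * (1 - min c (1/((t:ℝ)+1))) ≤ min c (1/((t:ℝ)+1)) := by
  have htp : (0:ℝ) < t := by exact_mod_cast ht
  have ht1 : (0:ℝ) < (t:ℝ) + 1 := by linarith
  rcases le_total c (1/((t:ℝ)+1)) with h | h
  · rw [min_eq_left h]
    have h1 : min c (1/(t:ℝ)) ≤ c := min_le_left _ _
    have h2 : (1:ℝ)/((t:ℝ)+1) ≤ 1 := by
      rw [div_le_one ht1]; linarith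
    have h3 : (0:ℝ) ≤ 1 - c := by linarith
    have h4 : 0 ≤ min c (1/(t:ℝ)) := le_min hc.le (by positivity)
    nlinarith
  · rw [min_eq_right h]
    have h1 : min c (1/(t:ℝ)) ≤ 1/(t:ℝ) := min_le_right _ _
    have h2 : (0:ℝ) ≤ 1 - 1/((t:ℝ)+1) := by
      have : (1:ℝ)/((t:ℝ)+1) ≤ 1 := by rw [div_le_one ht1]; linarith
      linarith
    have h4 : 0 ≤ min c (1/(t:ℝ)) := le_min hc.le (by positivity)
    have key : (1/(t:ℝ)) * (1 - 1/((t:ℝ)+1)) = 1/((t:ℝ)+1) := by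
      field_simp
      ring
    nlinarith [mul_le_mul_of_nonneg_right h1 h2]



set_option maxHeartbeats 2000000 in
/-- (Corollary 3.6 of the paper.)  SGD without replacement with step
sizes `η_t = min{λ/(2β²), 4/(λ t)}` is on-average-oos stable with rate `8G/(λ m)` for
all `m ≤ T/(2κ)`, `κ = β/λ`: the expected distance between the iterate `w_{m+1}` and the
coupled iterate `w^{(i)}_{m+1}` obtained by swapping `z_i` for `z_{m+1}` is at most
`8G/(λ m)`.  Datapoints are labelled by `Fin T` and the expectation is the average over
all permutations `σ`. -/
theorem sgd_without_replacement_stability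
    {d : ℕ} (T : ℕ)
    (W : Set (EuclideanSpace ℝ (Fin d))) (hWconv : Convex ℝ W) (hWclosed : IsClosed W)
    (proj : EuclideanSpace ℝ (Fin d) → EuclideanSpace ℝ (Fin d))
    (hproj : ∀ x, proj x ∈ W ∧ ∀ w ∈ W, ‖x - proj x‖ ≤ ‖x - w‖)
    (f : EuclideanSpace ℝ (Fin d) → Fin T → ℝ)
    (G β lam : ℝ) (hG : 0 < G) (hβ : 0 < β) (hlam : 0 < lam)
    (hdiff : ∀ z, Differentiable ℝ (fun w => f w z))
    (hLip : ∀ z, ∀ w ∈ W, ‖gradient (fun u => f u z) w‖ ≤ G)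
    (hsmooth : ∀ z, ∀ x ∈ W, ∀ y ∈ W,
      ‖gradient (fun u => f u z) x - gradient (fun u => f u z) y‖ ≤ β * ‖x - y‖)
    -- the average loss `F` is `λ`-strongly convex
    (hstrong : StrongConvexOnSet W lam (fun w => (1 / T : ℝ) * ∑ z : Fin T, f w z))
    (η : ℕ → ℝ) (hη : ∀ t : ℕ, η t = min (lam / (2 * β ^ 2)) (4 / (lam * t)))
    (w1 : EuclideanSpace ℝ (Fin d)) (hw1 : w1 ∈ W)
    (m i : ℕ) (hi1 : 1 ≤ i) (him : i ≤ m) (hmT : m < T)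
    -- `m ≤ T / (2κ)` with `κ = β/λ`
    (hm : (m : ℝ) ≤ (T : ℝ) / (2 * (β / lam))) :
    (∑ σ : Equiv.Perm (Fin T),
        ‖gdIter proj f η (ordSeq (by omega) σ) w1 m
          - gdIter proj f η
              (fun t => if t = i then σ ⟨m, hmT⟩ else ordSeq (by omega) σ t) w1 m‖)
      / (Nat.factorial T : ℝ)
    ≤ 8 * G / (lam * m) := by
  classical
  have hT : 0 < T := by omega
  set zs : Equiv.Perm (Fin T) → ℕ → Fin T := fun σ => ordSeq hT σ with hzs
  set zs' : Equiv.Perm (Fin T) → ℕ → Fin T :=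
    fun σ t => if t = i then σ ⟨m, hmT⟩ else ordSeq hT σ t with hzs'
  set X : Equiv.Perm (Fin T) → ℕ → EuclideanSpace ℝ (Fin d) :=
    fun σ k => gdIter proj f η (zs σ) w1 k with hX
  set Y : Equiv.Perm (Fin T) → ℕ → EuclideanSpace ℝ (Fin d) :=
    fun σ k => gdIter proj f η (zs' σ) w1 k with hY
  show (∑ σ : Equiv.Perm (Fin T), ‖X σ m - Y σ m‖) / (Nat.factorial T : ℝ)
    ≤ 8 * G / (lam * m)
  set c : ℝ := lam ^ 2 / (8 * β ^ 2) with hc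
  have hc0 : 0 < c := by positivity
  -- step size facts
  have hη0 : ∀ t : ℕ, 1 ≤ t → 0 ≤ η t := by
    intro t ht
    have htR : (0:ℝ) < (t:ℝ) := by exact_mod_cast ht
    rw [hη]
    exact le_min (by positivity) (by positivity)
  have hη1 : ∀ t : ℕ, η t ≤ lam / (2 * β ^ 2) := fun t => by rw [hη]; exact min_le_left _ _
  have hη2 : ∀ t : ℕ, 2 ≤ t → η t * lam ≤ 2 := by
    intro t ht
    have htR : (2:ℝ) ≤ (t:ℝ) := by exact_mod_cast ht
    have h4 : η t ≤ 4 / (lam * t) := by rw [hη]; exact min_le_right _ _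
    have hlt : (0:ℝ) < lam * t := by positivity
    calc η t * lam ≤ (4 / (lam * t)) * lam := mul_le_mul_of_nonneg_right h4 hlam.le
      _ = 4 / t := by field_simp
      _ ≤ 2 := by rw [div_le_iff₀ (by linarith : (0:ℝ) < (t:ℝ))]; linarith
  have hηminC : ∀ t : ℕ, 1 ≤ t → η t * lam / 4 = min c (1 / (t:ℝ)) := by
    intro t ht
    have htR : (0:ℝ) < (t:ℝ) := by exact_mod_cast ht
    rw [hη]
    rw [show min (lam / (2 * β ^ 2)) (4 / (lam * t)) * lam / 4
        = min (lam / (2 * β ^ 2)) (4 / (lam * t)) * (lam / 4) by ring]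
    rw [min_mul_of_nonneg _ _ (by positivity : (0:ℝ) ≤ lam / 4)]
    congr 1
    · rw [hc]; field_simp; ring
    · field_simp
  -- membership of iterates
  have Xmem : ∀ σ k, X σ k ∈ W := fun σ k => gdIter_mem proj hproj f η (zs σ) w1 hw1 k
  have Ymem : ∀ σ k, Y σ k ∈ W := fun σ k => gdIter_mem proj hproj f η (zs' σ) w1 hw1 k
  -- initial stability bound at step i
  have base : ∀ σ : Equiv.Perm (Fin T), ‖X σ i - Y σ i‖ ≤ 2 * G * η i := by
    intro σ
    obtain ⟨j, hj⟩ : ∃ j, i = j + 1 := ⟨i - 1, by omega⟩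
    have hXYj : X σ j = Y σ j := by
      apply gdIter_congr
      intro s h1 h2
      have : ¬ s = i := by omega
      show zs σ s = zs' σ s
      rw [hzs']
      simp only
      rw [if_neg this]
    have hXs : X σ (j+1) = proj (X σ j
        - η (j+1) • gradient (fun u => f u (zs σ (j+1))) (X σ j)) := rfl
    have hYs : Y σ (j+1) = proj (Y σ j
        - η (j+1) • gradient (fun u => f u (zs' σ (j+1))) (Y σ j)) := rfl
    have hη0i : 0 ≤ η (j+1) := hη0 _ (by omega)
    set g1 := gradient (fun u => f u (zs σ (j+1))) (X σ j) with hg1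
    set g2 := gradient (fun u => f u (zs' σ (j+1))) (Y σ j) with hg2
    have hn1 : ‖g1‖ ≤ G := hLip _ _ (Xmem σ j)
    have hn2 : ‖g2‖ ≤ G := hLip _ _ (Ymem σ j)
    rw [hj]
    calc ‖X σ (j+1) - Y σ (j+1)‖
        ≤ ‖(X σ j - η (j+1) • g1) - (Y σ j - η (j+1) • g2)‖ := by
          rw [hXs, hYs]
          exact proj_nonexp hWconv proj hproj _ _
      _ = ‖η (j+1) • (g2 - g1)‖ := by rw [hXYj, smul_sub]; congr 1; abel
      _ ≤ η (j+1) * (‖g1‖ + ‖g2‖) := by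
          rw [norm_smul, Real.norm_eq_abs, abs_of_nonneg hη0i]
          have := norm_sub_le g2 g1
          have h2 : ‖g2 - g1‖ ≤ ‖g1‖ + ‖g2‖ := by
            calc ‖g2 - g1‖ ≤ ‖g2‖ + ‖g1‖ := norm_sub_le _ _
              _ = ‖g1‖ + ‖g2‖ := by ring
          exact mul_le_mul_of_nonneg_left h2 hη0i
      _ ≤ 2 * G * η (j+1) := by nlinarith [hη0i]
  -- mβ bound
  have h2m : 2 * (m:ℝ) * β ≤ (T:ℝ) * lam := by
    have hpos : (0:ℝ) < 2 * (β / lam) := by positivity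
    rw [le_div_iff₀ hpos] at hm
    have := mul_le_mul_of_nonneg_right hm hlam.le
    have e : (m:ℝ) * (2 * (β / lam)) * lam = 2 * m * β := by field_simp
    linarith [e ▸ this]
  -- the contraction step
  have recursion : ∀ t : ℕ, i ≤ t → t < m →
      (∑ σ : Equiv.Perm (Fin T), ‖X σ (t+1) - Y σ (t+1)‖)
        ≤ (1 - η (t+1) * lam / 4) * ∑ σ : Equiv.Perm (Fin T), ‖X σ t - Y σ t‖ := by
    intro t hit htm
    have htT : t < T := by omega
    set p : Fin T := ⟨t, htT⟩ with hp
    have hmemA : ∀ s ∈ Finset.range t ∪ {m}, s < T := by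
      intro s hs
      simp only [Finset.mem_union, Finset.mem_range, Finset.mem_singleton] at hs
      omega
    set A : Finset (Fin T) := (Finset.range t ∪ {m}).attachFin hmemA with hA
    have hpA : p ∉ A := by
      rw [hA, Finset.mem_attachFin]
      simp only [Finset.mem_union, Finset.mem_range, Finset.mem_singleton]
      push_neg
      constructor <;> [skip; skip] <;> simp [hp] <;> omega
    have hAcard : A.card = t + 1 := by
      rw [hA, Finset.card_attachFin, Finset.card_union_of_disjoint, Finset.card_range,
        Finset.card_singleton]
      rw [Finset.disjoint_singleton_right, Finset.mem_range]
      omega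
    -- dependence of iterates on A only
    have hdep : ∀ σ τ : Equiv.Perm (Fin T), (∀ a ∈ A, σ a = τ a) →
        X σ t = X τ t ∧ Y σ t = Y τ t := by
      intro σ τ hagr
      have hval : ∀ s : ℕ, 1 ≤ s → s ≤ t → (⟨(s - 1) % T, Nat.mod_lt _ hT⟩ : Fin T) ∈ A := by
        intro s h1 h2
        rw [hA, Finset.mem_attachFin]
        simp only [Finset.mem_union, Finset.mem_range, Finset.mem_singleton]
        left
        have : (s - 1) % T = s - 1 := Nat.mod_eq_of_lt (by omega)
        omega
      have hmA : (⟨m, hmT⟩ : Fin T) ∈ A := by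
        rw [hA, Finset.mem_attachFin]
        simp only [Finset.mem_union, Finset.mem_range, Finset.mem_singleton]
        right; trivial
      constructor
      · apply gdIter_congr
        intro s h1 h2
        show ordSeq hT σ s = ordSeq hT τ s
        exact hagr _ (hval s h1 h2)
      · apply gdIter_congr
        intro s h1 h2
        by_cases hsi : s = i
        · show (if s = i then σ ⟨m, hmT⟩ else ordSeq hT σ s)
            = (if s = i then τ ⟨m, hmT⟩ else ordSeq hT τ s)
          rw [if_pos hsi, if_pos hsi]
          exact hagr _ hmA
        · show (if s = i then σ ⟨m, hmT⟩ else ordSeq hT σ s)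
            = (if s = i then τ ⟨m, hmT⟩ else ordSeq hT τ s)
          rw [if_neg hsi, if_neg hsi]
          exact hagr _ (hval s h1 h2)
    set Fn : Equiv.Perm (Fin T) → Fin T → ℝ := fun σ j =>
      ‖(X σ t - Y σ t) - η (t+1) • (gradient (fun u => f u j) (X σ t)
          - gradient (fun u => f u j) (Y σ t))‖ with hFn
    have hFdep : ∀ σ τ : Equiv.Perm (Fin T), (∀ a ∈ A, σ a = τ a) → ∀ j, Fn σ j = Fn τ j := by
      intro σ τ h j
      obtain ⟨e1, e2⟩ := hdep σ τ h
      rw [hFn]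
      simp only
      rw [e1, e2]
    -- pointwise: the (t+1)-st step uses the common sample σ p
    have hstepa : ∀ σ : Equiv.Perm (Fin T), ‖X σ (t+1) - Y σ (t+1)‖ ≤ Fn σ (σ p) := by
      intro σ
      have hz1 : zs σ (t+1) = σ p := by
        show ordSeq hT σ (t+1) = σ p
        unfold ordSeq
        congr 1
        apply Fin.ext
        simp only [Nat.add_sub_cancel, hp]
        exact Nat.mod_eq_of_lt htT
      have hz2 : zs' σ (t+1) = σ p := by
        show (if t+1 = i then σ ⟨m, hmT⟩ else ordSeq hT σ (t+1)) = σ p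
        rw [if_neg (by omega : ¬ t+1 = i)]
        exact hz1
      have hXs : X σ (t+1) = proj (X σ t
          - η (t+1) • gradient (fun u => f u (zs σ (t+1))) (X σ t)) := rfl
      have hYs : Y σ (t+1) = proj (Y σ t
          - η (t+1) • gradient (fun u => f u (zs' σ (t+1))) (Y σ t)) := rfl
      calc ‖X σ (t+1) - Y σ (t+1)‖
          ≤ ‖(X σ t - η (t+1) • gradient (fun u => f u (σ p)) (X σ t))
              - (Y σ t - η (t+1) • gradient (fun u => f u (σ p)) (Y σ t))‖ := by
            rw [hXs, hYs, hz1, hz2]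
            exact proj_nonexp hWconv proj hproj _ _
        _ = Fn σ (σ p) := by
            rw [hFn]
            simp only
            congr 1
            rw [smul_sub]
            abel
    have hex := exchange_lemma A p hpA Fn hFdep
    rw [hAcard] at hex
    have hperσ : ∀ σ : Equiv.Perm (Fin T), ∑ j ∈ Finset.univ \ A.image ⇑σ, Fn σ j
        ≤ ((Finset.univ \ A.image ⇑σ).card : ℝ) * (1 - η (t+1) * lam / 4)
            * ‖X σ t - Y σ t‖ := by
      intro σ
      apply step_bound hT f β lam hβ hlam hdiff hsmooth hstrong _ _ (Xmem σ t) (Ymem σ t)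
        (η (t+1)) (hη0 _ (by omega)) (hη1 _) (hη2 _ (by omega))
      rw [Finset.card_image_of_injective _ σ.injective, hAcard]
      have htm' : ((t:ℝ) + 1) ≤ (m:ℝ) := by exact_mod_cast (by omega : t + 1 ≤ m)
      push_cast
      nlinarith [h2m, hβ.le]
    have hcards : ∀ σ : Equiv.Perm (Fin T),
        (Finset.univ \ A.image ⇑σ).card = T - (t+1) := by
      intro σ
      rw [Finset.card_sdiff_of_subset (Finset.subset_univ _),
        Finset.card_image_of_injective _ σ.injective, hAcard, Finset.card_univ,
        Fintype.card_fin]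
    have hTt : (0:ℝ) < ((T - (t+1) : ℕ) : ℝ) := by
      have : 0 < T - (t+1) := by omega
      exact_mod_cast this
    have hsum1 : ((T - (t+1) : ℕ) : ℝ) * ∑ σ : Equiv.Perm (Fin T), Fn σ (σ p)
        ≤ ((T - (t+1) : ℕ) : ℝ) * ((1 - η (t+1) * lam / 4)
            * ∑ σ : Equiv.Perm (Fin T), ‖X σ t - Y σ t‖) := by
      calc ((T - (t+1) : ℕ) : ℝ) * ∑ σ : Equiv.Perm (Fin T), Fn σ (σ p)
          = ∑ σ : Equiv.Perm (Fin T), ∑ j ∈ Finset.univ \ A.image ⇑σ, Fn σ j := hex.symm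
        _ ≤ ∑ σ : Equiv.Perm (Fin T), ((Finset.univ \ A.image ⇑σ).card : ℝ)
              * (1 - η (t+1) * lam / 4) * ‖X σ t - Y σ t‖ :=
            Finset.sum_le_sum (fun σ _ => hperσ σ)
        _ = ∑ σ : Equiv.Perm (Fin T), ((T - (t+1) : ℕ) : ℝ)
              * ((1 - η (t+1) * lam / 4) * ‖X σ t - Y σ t‖) := by
            refine Finset.sum_congr rfl (fun σ _ => ?_)
            rw [hcards σ, mul_assoc]
        _ = ((T - (t+1) : ℕ) : ℝ) * ((1 - η (t+1) * lam / 4)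
              * ∑ σ : Equiv.Perm (Fin T), ‖X σ t - Y σ t‖) := by
            rw [← Finset.mul_sum, ← Finset.mul_sum]
    have hfinal := le_of_mul_le_mul_left hsum1 hTt
    calc ∑ σ : Equiv.Perm (Fin T), ‖X σ (t+1) - Y σ (t+1)‖
        ≤ ∑ σ : Equiv.Perm (Fin T), Fn σ (σ p) := Finset.sum_le_sum (fun σ _ => hstepa σ)
      _ ≤ (1 - η (t+1) * lam / 4) * ∑ σ : Equiv.Perm (Fin T), ‖X σ t - Y σ t‖ := hfinal
  -- the main induction
  have Npos : (0:ℝ) < (Nat.factorial T : ℝ) := by exact_mod_cast Nat.factorial_pos T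
  have hCnn : (0:ℝ) ≤ (Nat.factorial T : ℝ) * (8 * G / lam) := by positivity
  have main : ∀ t : ℕ, i ≤ t → t ≤ m →
      (∑ σ : Equiv.Perm (Fin T), ‖X σ t - Y σ t‖)
        ≤ (Nat.factorial T : ℝ) * (8 * G / lam) * min c (1 / (t:ℝ)) := by
    intro t hit
    induction t, hit using Nat.le_induction with
    | base =>
      intro _
      have hcard : (Finset.univ : Finset (Equiv.Perm (Fin T))).card = Nat.factorial T := by
        rw [Finset.card_univ, Fintype.card_perm, Fintype.card_fin]
      calc ∑ σ : Equiv.Perm (Fin T), ‖X σ i - Y σ i‖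
          ≤ ∑ _σ : Equiv.Perm (Fin T), 2 * G * η i :=
            Finset.sum_le_sum (fun σ _ => base σ)
        _ = (Nat.factorial T : ℝ) * (2 * G * η i) := by
            rw [Finset.sum_const, hcard, nsmul_eq_mul]
        _ = (Nat.factorial T : ℝ) * (8 * G / lam) * min c (1 / (i:ℝ)) := by
            rw [← hηminC i hi1]
            field_simp
            ring
    | succ t hit ih =>
      intro htm1
      have bt := ih (by omega)
      have hrec := recursion t hit (by omega)
      have hfac : η (t+1) * lam / 4 = min c (1 / ((t:ℝ)+1)) := by
        have := hηminC (t+1) (by omega)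
        rw [this]
        norm_num
      have hfacnn : (0:ℝ) ≤ 1 - η (t+1) * lam / 4 := by
        rw [hfac]
        have h1 : min c (1 / ((t:ℝ)+1)) ≤ 1 / ((t:ℝ)+1) := min_le_right _ _
        have h2 : (1:ℝ) / ((t:ℝ)+1) ≤ 1 := by
          rw [div_le_one (by positivity : (0:ℝ) < (t:ℝ)+1)]
          have : (0:ℝ) ≤ (t:ℝ) := Nat.cast_nonneg t
          linarith
        linarith
      have hmp := min_prod_step c hc0 t (by omega)
      calc ∑ σ : Equiv.Perm (Fin T), ‖X σ (t+1) - Y σ (t+1)‖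
          ≤ (1 - η (t+1) * lam / 4) * ∑ σ : Equiv.Perm (Fin T), ‖X σ t - Y σ t‖ := hrec
        _ ≤ (1 - η (t+1) * lam / 4)
              * ((Nat.factorial T : ℝ) * (8 * G / lam) * min c (1 / (t:ℝ))) :=
            mul_le_mul_of_nonneg_left bt hfacnn
        _ = (Nat.factorial T : ℝ) * (8 * G / lam)
              * (min c (1 / (t:ℝ)) * (1 - min c (1 / ((t:ℝ)+1)))) := by
            rw [hfac]; ring
        _ ≤ (Nat.factorial T : ℝ) * (8 * G / lam) * min c (1 / ((t:ℝ)+1)) :=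
            mul_le_mul_of_nonneg_left hmp hCnn
        _ = (Nat.factorial T : ℝ) * (8 * G / lam) * min c (1 / ((t+1:ℕ):ℝ)) := by
            norm_num
  -- conclude
  have hm0 : (0:ℝ) < (m:ℝ) := by exact_mod_cast (by omega : 0 < m)
  have hfin := main m him le_rfl
  rw [div_le_iff₀ Npos]
  calc ∑ σ : Equiv.Perm (Fin T), ‖X σ m - Y σ m‖
      ≤ (Nat.factorial T : ℝ) * (8 * G / lam) * min c (1 / (m:ℝ)) := hfin
    _ ≤ (Nat.factorial T : ℝ) * (8 * G / lam) * (1 / (m:ℝ)) :=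
        mul_le_mul_of_nonneg_left (min_le_right _ _) hCnn
    _ = 8 * G / (lam * m) * (Nat.factorial T : ℝ) := by
        field_simp
end

section
/- Let W ⊆ ℝ^d be closed convex with diameter at most D, let F: W → ℝ be λ-strongly convex with minimizer w* := argmin_{w∈W} F(w), and suppose ‖∇F(w)‖ ≤ G for all w ∈ W. Consider τ iterations of projected SGD w_{t+1} = Π_W(w_t − η_t ĝ_t) with arbitrary gradient estimates ĝ_t satisfying ‖ĝ_t‖ ≤ G, and step sizes η_t = min{ μ̃/β², 2/(μ̃ t) } for some μ̃ ≤ λ and β > 0. Then with probability one, ∑_{t=1}^{τ} (F(w_t) − F(w*)) ≤ β²D²/(2μ̃) + (G²/μ̃)(1 + log τ) + ∑_{t=1}^{τ} (∇F(w_t) − ĝ_t)ᵀ(w_t − w*). -/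
set_option maxHeartbeats 1000000
open RealInnerProductSpace Finset

lemma sgd_alg2 (m tv Gv : ℝ) (hm : 0 < m) (ht : 0 < tv) :
    2 / (m * tv) * Gv ^ 2 / 2 = Gv ^ 2 / m * (1 / tv) := by
  field_simp

lemma sgd_alg3 (m : ℝ) (hm : 0 < m) : 1 / (2 * (2 / m)) = m / 4 := by
  rw [eq_div_iff (by norm_num : (4:ℝ) ≠ 0)]
  field_simp
  norm_num

lemma sgd_alg1 (e Gv X Y : ℝ) (h : 0 < e) :
    1 / (2 * e) * (X - Y) + e * Gv ^ 2 / 2 = (X - Y + e ^ 2 * Gv ^ 2) / (2 * e) := by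
  field_simp


lemma proj_obtuse {d : ℕ} {W : Set (EuclideanSpace ℝ (Fin d))} (hW : Convex ℝ W)
    {x p : EuclideanSpace ℝ (Fin d)} (hp : p ∈ W)
    (hmin : ∀ v ∈ W, ‖x - p‖ ≤ ‖x - v‖) {v : EuclideanSpace ℝ (Fin d)} (hv : v ∈ W) :
    ⟪x - p, v - p⟫ ≤ 0 := by
  by_contra h
  push_neg at h
  set c : ℝ := ⟪x - p, v - p⟫ with hc
  have hvp : v - p ≠ 0 := by
    intro h0
    rw [hc, h0, inner_zero_right] at h
    exact lt_irrefl 0 h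
  have hnp : 0 < ‖v - p‖ := norm_pos_iff.mpr hvp
  set s : ℝ := ‖v - p‖ ^ 2 with hs
  have hs0 : 0 < s := by rw [hs]; positivity
  set θ : ℝ := min 1 (c / s) with hθ
  have hθ0 : 0 < θ := lt_min one_pos (div_pos h hs0)
  have hθ1 : θ ≤ 1 := min_le_left _ _
  have hθs : θ * s ≤ c := by
    calc θ * s ≤ (c / s) * s := by
          apply mul_le_mul_of_nonneg_right (min_le_right _ _) hs0.le
      _ = c := by field_simp
  have hq : p + θ • (v - p) ∈ W := by
    have := hW hp hv (by linarith : (0:ℝ) ≤ 1 - θ) hθ0.le (by ring)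
    convert this using 1
    module
  have hle := hmin _ hq
  have hsq : ‖x - (p + θ • (v - p))‖ ^ 2 = ‖x - p‖ ^ 2 - 2 * θ * c + θ ^ 2 * s := by
    have : x - (p + θ • (v - p)) = (x - p) - θ • (v - p) := by abel
    rw [this, norm_sub_sq_real, real_inner_smul_right, norm_smul]
    simp [hs, hc, mul_pow, abs_of_nonneg hθ0.le]
    ring
  have h2 : ‖x - p‖ ^ 2 ≤ ‖x - (p + θ • (v - p))‖ ^ 2 :=
    pow_le_pow_left₀ (norm_nonneg _) hle 2
  rw [hsq] at h2
  have h3 : 2 * θ * c ≤ θ ^ 2 * s := by linarith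
  have h4 : 2 * c ≤ θ * s := by
    have := mul_le_mul_of_nonneg_left h3 (le_of_lt (inv_pos.mpr hθ0))
    nlinarith
  nlinarith

lemma proj_nonexp_s10 {d : ℕ} {W : Set (EuclideanSpace ℝ (Fin d))} (hW : Convex ℝ W)
    {x p : EuclideanSpace ℝ (Fin d)} (hp : p ∈ W)
    (hmin : ∀ v ∈ W, ‖x - p‖ ≤ ‖x - v‖) {v : EuclideanSpace ℝ (Fin d)} (hv : v ∈ W) :
    ‖p - v‖ ≤ ‖x - v‖ := by
  have hob := proj_obtuse hW hp hmin hv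
  have hexp : ‖x - v‖ ^ 2 = ‖x - p‖ ^ 2 + 2 * ⟪x - p, p - v⟫ + ‖p - v‖ ^ 2 := by
    have : x - v = (x - p) + (p - v) := by abel
    rw [this, norm_add_sq_real]
  have hin : ⟪x - p, p - v⟫ = - ⟪x - p, v - p⟫ := by
    rw [← inner_neg_right]
    congr 1
    abel
  have : ‖p - v‖ ^ 2 ≤ ‖x - v‖ ^ 2 := by
    rw [hexp, hin]
    nlinarith [sq_nonneg ‖x - p‖]
  nlinarith [norm_nonneg (p - v), norm_nonneg (x - v)]

lemma harmonic_sum_le (τ : ℕ) (hτ : 1 ≤ τ) :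
    ∑ t ∈ Icc 1 τ, (1 : ℝ) / t ≤ 1 + Real.log τ := by
  induction τ, hτ using Nat.le_induction with
  | base => simp
  | succ n hn ih =>
    rw [Finset.sum_Icc_succ_top (by omega)]
    have hn0 : (0:ℝ) < n := by exact_mod_cast hn
    have hn1 : (0:ℝ) < (n:ℝ) + 1 := by linarith
    have hlog : Real.log n + 1 / ((n:ℝ) + 1) ≤ Real.log ((n:ℝ) + 1) := by
      have h1 := Real.log_le_sub_one_of_pos (show (0:ℝ) < (n:ℝ) / ((n:ℝ)+1) by positivity)
      rw [Real.log_div (ne_of_gt hn0) (ne_of_gt hn1)] at h1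
      have : (n:ℝ) / ((n:ℝ)+1) - 1 = - (1 / ((n:ℝ)+1)) := by field_simp; ring
      linarith [this ▸ h1]
    push_cast
    linarith

lemma telescope_sum_le (r a : ℕ → ℝ) (μ C D2 : ℝ)
    (hC : 0 ≤ C) (hμ : 0 < μ)
    (hr : ∀ t, 0 ≤ r t) (hrD : ∀ t, 1 ≤ t → r t ≤ D2)
    (ha : ∀ t, 1 ≤ t → 0 ≤ a t)
    (ha1 : a 1 ≤ μ / 2 + C)
    (hastep : ∀ t, 1 ≤ t → a (t + 1) ≤ a t + μ / 2)
    (τ : ℕ) (hτ : 1 ≤ τ) :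
    ∑ t ∈ Icc 1 τ, (a t * (r t - r (t + 1)) - μ / 2 * r t) ≤ C * D2 := by
  have key : ∀ n, 1 ≤ n →
      ∑ t ∈ Icc 1 n, (a t * (r t - r (t + 1)) - μ / 2 * r t) + a n * r (n + 1) ≤ C * D2 := by
    intro n hn
    induction n, hn using Nat.le_induction with
    | base =>
      simp only [Icc_self, sum_singleton]
      have h1 : r 1 ≤ D2 := hrD 1 le_rfl
      nlinarith [hr 1, hr 2]
    | succ n hn ih =>
      rw [Finset.sum_Icc_succ_top (by omega)]
      have h1 : (a (n+1) - μ/2) * r (n+1) ≤ a n * r (n+1) :=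
        mul_le_mul_of_nonneg_right (by linarith [hastep n hn]) (hr (n+1))
      nlinarith
  have := key τ hτ
  have h2 : 0 ≤ a τ * r (τ + 1) := mul_nonneg (ha τ hτ) (hr (τ+1))
  linarith




/-- (Lemma 4.1 of the paper.)  Projected SGD with arbitrary gradient
estimates `ĝ_t` of norm at most `G` and step sizes `η_t = min{μ̃/β², 2/(μ̃ t)}`, `μ̃ ≤ λ`,
run on a `λ`-strongly convex objective `F` over a set of diameter `D`, satisfies with
probability one
`∑_{t=1}^τ (F(w_t) - F(w*)) ≤ β²D²/(2μ̃) + (G²/μ̃)(1 + log τ) + ∑_t ⟨∇F(w_t) - ĝ_t, w_t - w*⟩`. -/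
theorem sgd_convergence_with_gradient_errors
    {d : ℕ}
    (W : Set (EuclideanSpace ℝ (Fin d))) (hWconv : Convex ℝ W) (hWclosed : IsClosed W)
    (D G lam μt β : ℝ) (hD : 0 ≤ D) (hG : 0 ≤ G) (hβ : 0 < β)
    (hμt : 0 < μt) (hμlam : μt ≤ lam)
    (hdiam : ∀ x ∈ W, ∀ y ∈ W, ‖x - y‖ ≤ D)
    (proj : EuclideanSpace ℝ (Fin d) → EuclideanSpace ℝ (Fin d))
    (hproj : ∀ x, proj x ∈ W ∧ ∀ w ∈ W, ‖x - proj x‖ ≤ ‖x - w‖)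
    (F : EuclideanSpace ℝ (Fin d) → ℝ) (hFdiff : Differentiable ℝ F)
    (hFstrong : StrongConvexOnSet W lam F)
    (hFgrad : ∀ w ∈ W, ‖gradient F w‖ ≤ G)
    (wstar : EuclideanSpace ℝ (Fin d)) (hws : wstar ∈ W)
    (hmin : ∀ w ∈ W, F wstar ≤ F w)
    (η : ℕ → ℝ) (hη : ∀ t : ℕ, η t = min (μt / β ^ 2) (2 / (μt * t)))
    (τ : ℕ) (hτ : 1 ≤ τ)
    (w g : ℕ → EuclideanSpace ℝ (Fin d))
    (hw1 : w 1 ∈ W)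
    (hg : ∀ t, ‖g t‖ ≤ G)
    (hstep : ∀ t, 1 ≤ t → w (t + 1) = proj (w t - η t • g t)) :
    ∑ t ∈ Finset.Icc 1 τ, (F (w t) - F wstar)
      ≤ β ^ 2 * D ^ 2 / (2 * μt) + G ^ 2 / μt * (1 + Real.log τ)
        + ∑ t ∈ Finset.Icc 1 τ, (inner ℝ (gradient F (w t) - g t) (w t - wstar) : ℝ) := by
  have hβ2 : (0:ℝ) < β ^ 2 := by positivity
  have hηpos : ∀ t : ℕ, 1 ≤ t → 0 < η t := by
    intro t ht
    have htR : (0:ℝ) < t := by exact_mod_cast ht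
    rw [hη]
    exact lt_min (div_pos hμt hβ2) (div_pos two_pos (by positivity))
  have hmem : ∀ t : ℕ, 1 ≤ t → w t ∈ W := by
    intro t ht
    match t, ht with
    | 1, _ => exact hw1
    | (n+2), _ =>
      rw [hstep (n+1) (by omega)]
      exact (hproj _).1
  set r : ℕ → ℝ := fun t => ‖w t - wstar‖ ^ 2 with hrdef
  set a : ℕ → ℝ := fun t => 1 / (2 * η t) with hadef
  have hr : ∀ t, 0 ≤ r t := fun t => by positivity
  have hrD : ∀ t, 1 ≤ t → r t ≤ D ^ 2 := fun t ht =>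
    pow_le_pow_left₀ (norm_nonneg _) (hdiam _ (hmem t ht) _ hws) 2
  have ha_pos : ∀ t, 1 ≤ t → 0 < a t := by
    intro t ht
    have := hηpos t ht
    simp only [hadef]
    positivity
  have ha1 : a 1 ≤ μt / 2 + β ^ 2 / (2 * μt) := by
    have h1 : η 1 = min (μt / β ^ 2) (2 / μt) := by rw [hη]; norm_num
    rcases min_cases (μt / β ^ 2) (2 / μt) with ⟨he, _⟩ | ⟨he, _⟩
    · have : a 1 = β ^ 2 / (2 * μt) := by
        simp only [hadef, h1, he]
        field_simp
      rw [this]; linarith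
    · have : a 1 = μt / 4 := by
        simp only [hadef, h1, he]
        rw [sgd_alg3 _ hμt]
      rw [this]
      have : (0:ℝ) ≤ β ^ 2 / (2 * μt) := by positivity
      linarith
  have hastep : ∀ t : ℕ, 1 ≤ t → a (t + 1) ≤ a t + μt / 2 := by
    intro t ht
    have htR : (0:ℝ) < t := by exact_mod_cast ht
    have ht1R : (0:ℝ) < (t:ℝ) + 1 := by linarith
    have hcast : ((t + 1 : ℕ) : ℝ) = (t : ℝ) + 1 := by push_cast; ring
    rcases le_or_gt (μt / β ^ 2) (2 / (μt * ((t:ℝ) + 1))) with h | h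
    · have hmono : 2 / (μt * ((t:ℝ) + 1)) ≤ 2 / (μt * t) := by
        apply div_le_div_of_nonneg_left two_pos.le (by positivity)
        nlinarith
      have e1 : η (t + 1) = μt / β ^ 2 := by
        rw [hη, hcast]; exact min_eq_left h
      have e2 : η t = μt / β ^ 2 := by
        rw [hη]; exact min_eq_left (le_trans h hmono)
      simp only [hadef, e1, e2]
      linarith [hμt]
    · have e1 : η (t + 1) = 2 / (μt * ((t:ℝ) + 1)) := by
        rw [hη, hcast]; exact min_eq_right h.le
      have hηle : η t ≤ 2 / (μt * t) := by rw [hη]; exact min_le_right _ _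
      have hb : (0:ℝ) < 2 / (μt * t) := by positivity
      have hat : μt * t / 4 ≤ a t := by
        have h2 : 1 / (2 * (2 / (μt * t))) ≤ 1 / (2 * η t) := by
          apply one_div_le_one_div_of_le (by linarith [hηpos t ht])
          linarith
        have h3 : 1 / (2 * (2 / (μt * t))) = μt * t / 4 := by
          field_simp
          ring
        simp only [hadef]
        linarith [h3 ▸ h2]
      have e2 : a (t + 1) = μt * ((t:ℝ) + 1) / 4 := by
        simp only [hadef, e1]
        field_simp
        ring
      rw [e2]
      linarith
  have hkey : ∀ t ∈ Finset.Icc 1 τ,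
      F (w t) - F wstar ≤ (a t * (r t - r (t + 1)) - μt / 2 * r t)
        + G ^ 2 / μt * (1 / (t:ℝ))
        + (inner ℝ (gradient F (w t) - g t) (w t - wstar) : ℝ) := by
    intro t htm
    have ht : 1 ≤ t := (Finset.mem_Icc.mp htm).1
    have htR : (0:ℝ) < t := by exact_mod_cast ht
    have hwt : w t ∈ W := hmem t ht
    have hηt : 0 < η t := hηpos t ht
    set u := w t - wstar with hu
    have hru : r t = ‖u‖ ^ 2 := rfl
    -- Step A
    have hA : r (t + 1) ≤ r t - 2 * η t * ⟪u, g t⟫ + η t ^ 2 * G ^ 2 := by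
      set x := w t - η t • g t with hx
      have hne : ‖w (t + 1) - wstar‖ ≤ ‖x - wstar‖ := by
        rw [hstep t ht]
        exact proj_nonexp_s10 hWconv (hproj x).1 (hproj x).2 hws
      have hsq : r (t + 1) ≤ ‖x - wstar‖ ^ 2 :=
        pow_le_pow_left₀ (norm_nonneg _) hne 2
      have hexp : ‖x - wstar‖ ^ 2 = r t - 2 * η t * ⟪u, g t⟫ + η t ^ 2 * ‖g t‖ ^ 2 := by
        have h0 : x - wstar = u - η t • g t := by rw [hx, hu]; abel
        rw [h0, norm_sub_sq_real, real_inner_smul_right, norm_smul, Real.norm_eq_abs,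
          abs_of_pos hηt, mul_pow, hru]
        ring
      have hg2 : ‖g t‖ ^ 2 ≤ G ^ 2 := pow_le_pow_left₀ (norm_nonneg _) (hg t) 2
      nlinarith [sq_nonneg (η t)]
    -- strong convexity
    have hB := hFstrong (w t) hwt wstar hws
    have hB1 : (inner ℝ (gradient F (w t)) (wstar - w t) : ℝ) = - ⟪gradient F (w t), u⟫ := by
      rw [← inner_neg_right]
      congr 1
      rw [hu]; abel
    have hB2 : ‖wstar - w t‖ ^ 2 = r t := by
      rw [hru, hu, norm_sub_rev]
    rw [hB1, hB2] at hB
    have hE : (inner ℝ (gradient F (w t) - g t) u : ℝ)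
        = ⟪gradient F (w t), u⟫ - ⟪g t, u⟫ := inner_sub_left _ _ _
    -- divide A
    have hdiv : ⟪u, g t⟫ ≤ a t * (r t - r (t + 1)) + η t * G ^ 2 / 2 := by
      have h2η : 0 < 2 * η t := by linarith
      have hat : a t = 1 / (2 * η t) := rfl
      rw [hat, sgd_alg1 _ _ _ _ hηt, le_div_iff₀ h2η]
      nlinarith [hA]
    have hηb : η t * G ^ 2 / 2 ≤ G ^ 2 / μt * (1 / (t:ℝ)) := by
      have h1 : η t ≤ 2 / (μt * t) := by rw [hη]; exact min_le_right _ _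
      have h2 : 2 / (μt * t) * G ^ 2 / 2 = G ^ 2 / μt * (1 / (t:ℝ)) :=
        sgd_alg2 _ _ _ hμt htR
      calc η t * G ^ 2 / 2 ≤ 2 / (μt * t) * G ^ 2 / 2 := by gcongr
        _ = _ := h2
    have hcomm : ⟪g t, u⟫ = ⟪u, g t⟫ := real_inner_comm _ _
    have hlam : μt / 2 * r t ≤ lam / 2 * r t := by
      apply mul_le_mul_of_nonneg_right _ (hr t)
      linarith
    linarith [hE, hB, hdiv, hηb]
  have hsum := Finset.sum_le_sum hkey
  rw [Finset.sum_add_distrib, Finset.sum_add_distrib] at hsum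
  have hT : ∑ t ∈ Finset.Icc 1 τ, (a t * (r t - r (t + 1)) - μt / 2 * r t)
      ≤ β ^ 2 / (2 * μt) * D ^ 2 :=
    telescope_sum_le r a μt (β ^ 2 / (2 * μt)) (D ^ 2) (by positivity) hμt hr hrD
      (fun t ht => (ha_pos t ht).le) ha1 hastep τ hτ
  have hH : ∑ t ∈ Finset.Icc 1 τ, G ^ 2 / μt * (1 / (t:ℝ))
      ≤ G ^ 2 / μt * (1 + Real.log τ) := by
    rw [← Finset.mul_sum]
    exact mul_le_mul_of_nonneg_left (harmonic_sum_le τ hτ) (by positivity)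
  have heq : β ^ 2 / (2 * μt) * D ^ 2 = β ^ 2 * D ^ 2 / (2 * μt) := by ring
  linarith [hsum, hT, hH]
end
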